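/- (Theorem 1, global convergence) Let ω ∈ (0,2) and θ ≥ 0 be such that δ = 2θ/ω + ((2−ω)/ω)·minᵢ Dᵢᵢ > 0, and suppose f is bounded below on ℝⁿ. Let (xᵏ)ₖ≥0 be a sequence in ℝⁿ and (vᵏ⁺¹)ₖ≥0 vectors such that for every k, vᵏ⁺¹ is a subgradient of h at xᵏ⁺¹ and B xᵏ⁺¹ + b + C xᵏ + vᵏ⁺¹ = 0. Then ‖A xᵏ⁺¹ + b + vᵏ⁺¹‖ → 0 as k → ∞; that is, the stationarity residual of the matrix splitting iterates converges to zero. -/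

import Mathlib

open scoped RealInnerProductSpace
open Matrix Filter

noncomputable section

/-- Euclidean space ℝⁿ. -/
abbrev E (n : ℕ) := EuclideanSpace ℝ (Fin n)

/-- Matrix-vector multiplication, valued in Euclidean space. -/
def mulVecE {n : ℕ} (M : Matrix (Fin n) (Fin n) ℝ) (x : E n) : E n :=
  (WithLp.equiv 2 (Fin n → ℝ)).symm (M.mulVec ((WithLp.equiv 2 (Fin n → ℝ)) x))

/-- Operator (spectral) norm of a matrix. -/
def opNorm {n : ℕ} (M : Matrix (Fin n) (Fin n) ℝ) : ℝ :=
  ‖Matrix.toEuclideanCLM (𝕜 := ℝ) M‖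

/-- The diagonal part `D` of `A`. -/
def Dmat {n : ℕ} (A : Matrix (Fin n) (Fin n) ℝ) : Matrix (Fin n) (Fin n) ℝ :=
  Matrix.diagonal fun i => A i i

/-- The strictly lower triangular part `L` of `A`. -/
def Lmat {n : ℕ} (A : Matrix (Fin n) (Fin n) ℝ) : Matrix (Fin n) (Fin n) ℝ :=
  Matrix.of fun i j => if (j : ℕ) < (i : ℕ) then A i j else 0

/-- `B = L + (1/ω)(D + θI)`. -/
def Bmat {n : ℕ} (ω θ : ℝ) (A : Matrix (Fin n) (Fin n) ℝ) : Matrix (Fin n) (Fin n) ℝ :=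
  Lmat A + ω⁻¹ • (Dmat A + θ • (1 : Matrix (Fin n) (Fin n) ℝ))

/-- `C = Lᵀ + (1/ω)((ω−1)D − θI)`. -/
def Cmat {n : ℕ} (ω θ : ℝ) (A : Matrix (Fin n) (Fin n) ℝ) : Matrix (Fin n) (Fin n) ℝ :=
  (Lmat A)ᵀ + ω⁻¹ • ((ω - 1) • Dmat A - θ • (1 : Matrix (Fin n) (Fin n) ℝ))

/-- `v` is a subgradient of `h` at `z`. -/
def IsSubgradient {n : ℕ} (h : E n → ℝ) (v z : E n) : Prop :=
  ∀ y, h z + ⟪v, y - z⟫ ≤ h y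

/-- The composite objective `f(x) = (1/2)⟨x, Ax⟩ + ⟨b, x⟩ + h(x)`. -/
def fObj {n : ℕ} (A : Matrix (Fin n) (Fin n) ℝ) (b : E n) (h : E n → ℝ) (x : E n) : ℝ :=
  (1/2) * ⟪x, mulVecE A x⟫ + ⟪b, x⟫ + h x

/-- `z` is a triangle-proximal point of `x`: there is a subgradient `v` of `h` at `z`
with `Bz + b + Cx + v = 0`. -/
def IsTriangleProx {n : ℕ} (ω θ : ℝ) (A : Matrix (Fin n) (Fin n) ℝ) (b : E n)
    (h : E n → ℝ) (x z : E n) : Prop :=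
  ∃ v, IsSubgradient h v z ∧
    mulVecE (Bmat ω θ A) z + b + mulVecE (Cmat ω θ A) x + v = 0
section msmAux
variable {n : ℕ}

lemma mulVecE_eq_clm (M : Matrix (Fin n) (Fin n) ℝ) (y : E n) :
    mulVecE M y = Matrix.toEuclideanCLM (𝕜 := ℝ) M y := by
  have := Matrix.toEuclideanCLM_toLp (𝕜 := ℝ) M ((WithLp.equiv 2 (Fin n → ℝ)) y)
  simpa [mulVecE] using this.symm

lemma inner_mulVecE (M : Matrix (Fin n) (Fin n) ℝ) (x y : E n) :
    ⟪x, mulVecE M y⟫ =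
      (WithLp.equiv 2 (Fin n → ℝ) x) ⬝ᵥ M.mulVec (WithLp.equiv 2 (Fin n → ℝ) y) := by
  simp [mulVecE, PiLp.inner_apply, RCLike.inner_apply, dotProduct, mul_comm]

lemma inner_self_dot (u : E n) :
    ⟪u, u⟫ = (WithLp.equiv 2 (Fin n → ℝ) u) ⬝ᵥ (WithLp.equiv 2 (Fin n → ℝ) u) := by
  rw [PiLp.inner_apply]
  simp [RCLike.inner_apply, dotProduct, sq]

lemma mulVecE_add_mat (M N : Matrix (Fin n) (Fin n) ℝ) (x : E n) :
    mulVecE (M + N) x = mulVecE M x + mulVecE N x := by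
  simp [mulVecE, Matrix.add_mulVec]

lemma mulVecE_sub (M : Matrix (Fin n) (Fin n) ℝ) (x y : E n) :
    mulVecE M (x - y) = mulVecE M x - mulVecE M y := by
  simp [mulVecE, Matrix.mulVec_sub]

lemma split_eq (A : Matrix (Fin n) (Fin n) ℝ) (hA : A.IsSymm) :
    Lmat A + Dmat A + (Lmat A)ᵀ = A := by
  ext i j
  rcases lt_trichotomy (j : ℕ) (i : ℕ) with hlt | heq | hgt
  · have this' : ¬ (i : ℕ) < (j : ℕ) := by omega
    have hne : i ≠ j := by intro h; omega
    simp [Lmat, Dmat, Matrix.diagonal_apply_ne _ hne, Matrix.transpose_apply]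
    rw [if_pos (show j < i from hlt), if_neg (show ¬ i < j from this')]
    ring
  · have hij : i = j := Fin.ext heq.symm
    subst hij
    simp [Lmat, Dmat]
  · have this' : ¬ (j : ℕ) < (i : ℕ) := by omega
    have hne : i ≠ j := by intro h; omega
    simp [Lmat, Dmat, Matrix.diagonal_apply_ne _ hne, Matrix.transpose_apply, hA.apply]
    rw [if_neg (show ¬ j < i from this'), if_pos (show i < j from hgt)]
    ring

lemma BC_eq (A : Matrix (Fin n) (Fin n) ℝ) (hA : A.IsSymm) {ω θ : ℝ} (hω : ω ≠ 0) :
    Bmat ω θ A + Cmat ω θ A = A := by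
  have key : Bmat ω θ A + Cmat ω θ A = Lmat A + Dmat A + (Lmat A)ᵀ := by
    ext i j
    simp only [Bmat, Cmat, Matrix.add_apply, Matrix.smul_apply, Matrix.sub_apply,
      Matrix.transpose_apply, smul_eq_mul]
    field_simp
    ring
  rw [key, split_eq A hA]

lemma dot_symm_mulVec (A : Matrix (Fin n) (Fin n) ℝ) (hA : A.IsSymm) (u w : Fin n → ℝ) :
    u ⬝ᵥ A.mulVec w = w ⬝ᵥ A.mulVec u := by
  rw [Matrix.dotProduct_mulVec, ← Matrix.mulVec_transpose, hA, dotProduct_comm]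

lemma dot_L (M : Matrix (Fin n) (Fin n) ℝ) (d : Fin n → ℝ) :
    d ⬝ᵥ Mᵀ.mulVec d = d ⬝ᵥ M.mulVec d := by
  rw [Matrix.mulVec_transpose, dotProduct_comm, ← Matrix.dotProduct_mulVec]

lemma quad_key (hn : 0 < n) (A : Matrix (Fin n) (Fin n) ℝ) (hA : A.IsSymm)
    {ω θ δ : ℝ} (hω : ω ∈ Set.Ioo (0 : ℝ) 2) (hθ : 0 ≤ θ)
    (hδ : δ = 2 * θ / ω + (2 - ω) / ω * ⨅ i, A i i) (d : Fin n → ℝ) :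
    (1/2) * (d ⬝ᵥ A.mulVec d) - d ⬝ᵥ (Bmat ω θ A).mulVec d ≤ -(δ/2) * (d ⬝ᵥ d) := by
  have hNE : Nonempty (Fin n) := ⟨⟨0, hn⟩⟩
  obtain ⟨hω0, hω2⟩ := hω
  set m := ⨅ i, A i i with hm
  have hS : (0:ℝ) ≤ d ⬝ᵥ d := by
    unfold dotProduct; exact Finset.sum_nonneg fun i _ => mul_self_nonneg _
  have hD : m * (d ⬝ᵥ d) ≤ d ⬝ᵥ (Dmat A).mulVec d := by
    unfold dotProduct
    rw [Finset.mul_sum]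
    apply Finset.sum_le_sum
    intro i _
    have hmi : m ≤ A i i := ciInf_le (Set.finite_range _).bddBelow i
    rw [Dmat, Matrix.mulVec_diagonal]
    nlinarith [mul_self_nonneg (d i)]
  have hAd : d ⬝ᵥ A.mulVec d = 2 * (d ⬝ᵥ (Lmat A).mulVec d) + d ⬝ᵥ (Dmat A).mulVec d := by
    conv_lhs => rw [← split_eq A hA]
    rw [Matrix.add_mulVec, Matrix.add_mulVec, dotProduct_add, dotProduct_add, dot_L]
    ring
  have hBd : d ⬝ᵥ (Bmat ω θ A).mulVec d
      = d ⬝ᵥ (Lmat A).mulVec d + ω⁻¹ * (d ⬝ᵥ (Dmat A).mulVec d + θ * (d ⬝ᵥ d)) := by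
    rw [Bmat, Matrix.add_mulVec, dotProduct_add, Matrix.smul_mulVec,
      Matrix.add_mulVec, Matrix.smul_mulVec, Matrix.one_mulVec]
    simp [dotProduct_smul, smul_eq_mul, dotProduct_add]
    ring
  rw [hAd, hBd]
  have hcoef : (1/2 - ω⁻¹ : ℝ) ≤ 0 := by
    have : (1/2 : ℝ) ≤ ω⁻¹ := by
      rw [inv_eq_one_div, le_div_iff₀ hω0]; linarith
    linarith
  have h1 : (1/2 - ω⁻¹) * (d ⬝ᵥ (Dmat A).mulVec d) ≤ (1/2 - ω⁻¹) * (m * (d ⬝ᵥ d)) :=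
    mul_le_mul_of_nonpos_left hD hcoef
  have h2 : -(δ/2) * (d ⬝ᵥ d) = (1/2 - ω⁻¹) * (m * (d ⬝ᵥ d)) - ω⁻¹ * (θ * (d ⬝ᵥ d)) := by
    rw [hδ]; field_simp; ring
  linarith

lemma main_ineq (hn : 0 < n) (A : Matrix (Fin n) (Fin n) ℝ) (hA : A.IsSymm)
    {ω θ δ : ℝ} (hω : ω ∈ Set.Ioo (0 : ℝ) 2) (hθ : 0 ≤ θ)
    (hδ : δ = 2 * θ / ω + (2 - ω) / ω * ⨅ i, A i i) (W Dv : Fin n → ℝ) :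
    (1/2) * ((W + Dv) ⬝ᵥ A.mulVec (W + Dv)) - (1/2) * (W ⬝ᵥ A.mulVec W)
      - Dv ⬝ᵥ (Bmat ω θ A).mulVec (W + Dv) - Dv ⬝ᵥ (Cmat ω θ A).mulVec W
    ≤ -(δ/2) * (Dv ⬝ᵥ Dv) := by
  have hBC := BC_eq A hA (θ := θ) (ne_of_gt hω.1)
  have e1 : (W + Dv) ⬝ᵥ A.mulVec (W + Dv)
      = W ⬝ᵥ A.mulVec W + 2 * (Dv ⬝ᵥ A.mulVec W) + Dv ⬝ᵥ A.mulVec Dv := by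
    rw [Matrix.mulVec_add, add_dotProduct, dotProduct_add, dotProduct_add,
      dot_symm_mulVec A hA W Dv]
    ring
  have e2 : Dv ⬝ᵥ (Bmat ω θ A).mulVec (W + Dv) + Dv ⬝ᵥ (Cmat ω θ A).mulVec W
      = Dv ⬝ᵥ A.mulVec W + Dv ⬝ᵥ (Bmat ω θ A).mulVec Dv := by
    have e0 : (Bmat ω θ A).mulVec W + (Cmat ω θ A).mulVec W = A.mulVec W := by
      rw [← Matrix.add_mulVec, hBC]
    rw [Matrix.mulVec_add, dotProduct_add, ← e0, dotProduct_add]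
    ring
  have hq := quad_key hn A hA ⟨hω.1, hω.2⟩ hθ hδ Dv
  linarith

lemma descent (hn : 0 < n) (A : Matrix (Fin n) (Fin n) ℝ) (hA : A.IsSymm)
    (b : E n) (h : E n → ℝ) {ω θ δ : ℝ} (hω : ω ∈ Set.Ioo (0 : ℝ) 2) (hθ : 0 ≤ θ)
    (hδ : δ = 2 * θ / ω + (2 - ω) / ω * ⨅ i, A i i)
    (w z vz : E n) (hsub : IsSubgradient h vz z)
    (heqk : mulVecE (Bmat ω θ A) z + b + mulVecE (Cmat ω θ A) w + vz = 0) :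
    fObj A b h z + δ/2 * ‖z - w‖^2 ≤ fObj A b h w := by
  have hvz : vz = -(mulVecE (Bmat ω θ A) z + b + mulVecE (Cmat ω θ A) w) :=
    eq_neg_of_add_eq_zero_right heqk
  have h1 : ⟪z, mulVecE A z⟫ =
      (WithLp.equiv 2 (Fin n → ℝ) z) ⬝ᵥ A.mulVec (WithLp.equiv 2 (Fin n → ℝ) z) :=
    inner_mulVecE A z z
  have h2 : ⟪w, mulVecE A w⟫ =
      (WithLp.equiv 2 (Fin n → ℝ) w) ⬝ᵥ A.mulVec (WithLp.equiv 2 (Fin n → ℝ) w) :=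
    inner_mulVecE A w w
  have hsubE : WithLp.equiv 2 (Fin n → ℝ) (z - w)
      = WithLp.equiv 2 (Fin n → ℝ) z - WithLp.equiv 2 (Fin n → ℝ) w := by simp
  have h3 : ‖z - w‖^2 = (WithLp.equiv 2 (Fin n → ℝ) z - WithLp.equiv 2 (Fin n → ℝ) w)
      ⬝ᵥ (WithLp.equiv 2 (Fin n → ℝ) z - WithLp.equiv 2 (Fin n → ℝ) w) := by
    rw [← real_inner_self_eq_norm_sq, inner_self_dot, hsubE]
  have h4 := hsub w
  have h5 : ⟪vz, w - z⟫ =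
      (WithLp.equiv 2 (Fin n → ℝ) z - WithLp.equiv 2 (Fin n → ℝ) w)
        ⬝ᵥ (Bmat ω θ A).mulVec (WithLp.equiv 2 (Fin n → ℝ) z)
      + (⟪b, z⟫ - ⟪b, w⟫)
      + (WithLp.equiv 2 (Fin n → ℝ) z - WithLp.equiv 2 (Fin n → ℝ) w)
        ⬝ᵥ (Cmat ω θ A).mulVec (WithLp.equiv 2 (Fin n → ℝ) w) := by
    rw [hvz, show w - z = -(z - w) from by abel, inner_neg_neg, inner_add_left,
      inner_add_left, real_inner_comm (z - w) (mulVecE (Bmat ω θ A) z),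
      real_inner_comm (z - w) (mulVecE (Cmat ω θ A) w), inner_mulVecE, inner_mulVecE, hsubE,
      inner_sub_right]
  have key := main_ineq hn A hA hω hθ hδ (WithLp.equiv 2 (Fin n → ℝ) w)
    (WithLp.equiv 2 (Fin n → ℝ) z - WithLp.equiv 2 (Fin n → ℝ) w)
  rw [show WithLp.equiv 2 (Fin n → ℝ) w
      + (WithLp.equiv 2 (Fin n → ℝ) z - WithLp.equiv 2 (Fin n → ℝ) w)
      = WithLp.equiv 2 (Fin n → ℝ) z from by abel] at key
  simp only [fObj]
  rw [h3]
  linarith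

set_option synthInstance.maxHeartbeats 1000000 in
lemma mulVecE_norm_le (M : Matrix (Fin n) (Fin n) ℝ) (y : E n) :
    ‖mulVecE M y‖ ≤ opNorm M * ‖y‖ := by
  rw [mulVecE_eq_clm, opNorm]
  exact ContinuousLinearMap.le_opNorm _ _

end msmAux

/-- Theorem 1, global convergence. -/
theorem msm_residual_tendsto_zero {n : ℕ} (hn : 0 < n)
    (A : Matrix (Fin n) (Fin n) ℝ) (hA : A.IsSymm) (b : E n) (h : E n → ℝ)
    (ω θ : ℝ) (hω : ω ∈ Set.Ioo (0 : ℝ) 2) (hθ : 0 ≤ θ)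
    (δ : ℝ) (hδ : δ = 2 * θ / ω + (2 - ω) / ω * ⨅ i, A i i) (hδpos : 0 < δ)
    (hbdd : ∃ M : ℝ, ∀ y : E n, M ≤ fObj A b h y)
    (x v : ℕ → E n)
    (hv : ∀ k : ℕ, IsSubgradient h (v (k + 1)) (x (k + 1)))
    (heq : ∀ k : ℕ, mulVecE (Bmat ω θ A) (x (k + 1)) + b
        + mulVecE (Cmat ω θ A) (x k) + v (k + 1) = 0) :
    Tendsto (fun k : ℕ => ‖mulVecE A (x (k + 1)) + b + v (k + 1)‖) atTop (nhds 0) := by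
  obtain ⟨M0, hM0⟩ := hbdd
  have hdesc : ∀ k : ℕ, fObj A b h (x (k+1)) + δ/2 * ‖x (k+1) - x k‖^2 ≤ fObj A b h (x k) :=
    fun k => descent hn A hA b h hω hθ hδ (x k) (x (k+1)) (v (k+1)) (hv k) (heq k)
  set a : ℕ → ℝ := fun k => fObj A b h (x k) with ha
  have hanti : Antitone a := antitone_nat_of_succ_le fun k => by
    have h0 := hdesc k
    have h1 : (0:ℝ) ≤ δ/2 * ‖x (k+1) - x k‖^2 :=
      mul_nonneg (by linarith) (sq_nonneg _)
    simp only [ha]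
    linarith
  have hbb : BddBelow (Set.range a) := ⟨M0, by rintro _ ⟨k, rfl⟩; exact hM0 _⟩
  have hconv := tendsto_atTop_ciInf hanti hbb
  have hshift : Tendsto (fun k => a (k+1)) atTop (nhds (⨅ i, a i)) :=
    hconv.comp (tendsto_add_atTop_nat 1)
  have hdiff : Tendsto (fun k => a k - a (k+1)) atTop (nhds 0) := by
    simpa using hconv.sub hshift
  have hsq : Tendsto (fun k => ‖x (k+1) - x k‖^2) atTop (nhds 0) := by
    have hg : Tendsto (fun k => (2/δ) * (a k - a (k+1))) atTop (nhds 0) := by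
      simpa using hdiff.const_mul (2/δ)
    refine squeeze_zero (fun k => sq_nonneg _) (fun k => ?_) hg
    have hk := hdesc k
    have h1 : δ/2 * ‖x (k+1) - x k‖^2 ≤ a k - a (k+1) := by
      simp only [ha]; linarith
    calc ‖x (k+1) - x k‖^2 = (2/δ) * (δ/2 * ‖x (k+1) - x k‖^2) := by field_simp
      _ ≤ (2/δ) * (a k - a (k+1)) :=
          mul_le_mul_of_nonneg_left h1 (by positivity)
  have hd : Tendsto (fun k => ‖x (k+1) - x k‖) atTop (nhds 0) := by
    have h' := (Real.continuous_sqrt.tendsto 0).comp hsq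
    rw [Real.sqrt_zero] at h'
    exact h'.congr fun k => Real.sqrt_sq (norm_nonneg _)
  have hres : ∀ k : ℕ, mulVecE A (x (k+1)) + b + v (k+1)
      = mulVecE (Cmat ω θ A) (x (k+1) - x k) := by
    intro k
    have h0 := heq k
    have hBCv := BC_eq A hA (θ := θ) (ne_of_gt hω.1)
    have hsplit : mulVecE A (x (k+1))
        = mulVecE (Bmat ω θ A) (x (k+1)) + mulVecE (Cmat ω θ A) (x (k+1)) := by
      rw [← mulVecE_add_mat, hBCv]
    rw [hsplit, mulVecE_sub]
    calc mulVecE (Bmat ω θ A) (x (k+1)) + mulVecE (Cmat ω θ A) (x (k+1)) + b + v (k+1)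
        = mulVecE (Cmat ω θ A) (x (k+1)) - mulVecE (Cmat ω θ A) (x k)
          + (mulVecE (Bmat ω θ A) (x (k+1)) + b + mulVecE (Cmat ω θ A) (x k) + v (k+1)) := by
          abel
      _ = mulVecE (Cmat ω θ A) (x (k+1)) - mulVecE (Cmat ω θ A) (x k) := by rw [h0, add_zero]
  have hbound : ∀ k : ℕ, ‖mulVecE A (x (k+1)) + b + v (k+1)‖
      ≤ opNorm (Cmat ω θ A) * ‖x (k+1) - x k‖ := by
    intro k
    rw [hres k]
    exact mulVecE_norm_le _ _
  refine squeeze_zero (fun k => norm_nonneg _) hbound ?_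
  simpa using hd.const_mul (opNorm (Cmat ω θ A))
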